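/- Let q ≥ 2, m ≥ 3 odd, n = q^m - 1, and let h satisfy 3 ≤ h ≤ (m-1)/2. For any t ≥ 1 and any tuple 0 < i_1 < i_2 < ... < i_t ≤ h-1, let i = 1 + q^{i_1} + ... + q^{i_t}. Then for every u with 1 ≤ u ≤ m-1, n does not divide i(q^u - 1); consequently the q-cyclotomic coset of i modulo n has size m. -/

import Mathlib

private lemma aux_dvd_mul (N I x : ℤ) (k a : ℕ) (h : N ∣ I * (x ^ a - 1)) :
    N ∣ I * (x ^ (k * a) - 1) := by
  have hdvd : (x ^ a - 1) ∣ (x ^ (k * a) - 1) := by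
    have := sub_dvd_pow_sub_pow (x ^ a) 1 k
    simpa [← pow_mul, mul_comm] using this
  exact h.trans (mul_dvd_mul_left I hdvd)

private lemma aux_mod (N I x : ℤ) (a b : ℕ) (h1 : N ∣ I * (x ^ a - 1))
    (h2 : N ∣ I * (x ^ b - 1)) : N ∣ I * (x ^ (b % a) - 1) := by
  have h3 : N ∣ I * (x ^ ((b / a) * a) - 1) := aux_dvd_mul N I x (b / a) a h1
  have hb : (b / a) * a + b % a = b := Nat.div_add_mod' b a
  have key : I * (x ^ (b % a) - 1)
      = I * (x ^ b - 1) - x ^ (b % a) * (I * (x ^ ((b / a) * a) - 1)) := by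
    have hx : x ^ b = x ^ ((b / a) * a) * x ^ (b % a) := by
      rw [← pow_add, hb]
    rw [hx]; ring
  rw [key]
  exact dvd_sub h2 (Dvd.dvd.mul_left h3 _)

private lemma aux_gcd (N I x : ℤ) : ∀ a b : ℕ, N ∣ I * (x ^ a - 1) →
    N ∣ I * (x ^ b - 1) → N ∣ I * (x ^ (Nat.gcd a b) - 1) := by
  intro a b
  induction a, b using Nat.gcd.induction with
  | H0 b => intro _ h2; simpa using h2
  | H1 a b ha ih =>
    intro h1 h2
    rw [Nat.gcd_rec]
    exact ih (aux_mod N I x a b h1 h2) h1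

private lemma stmt16_geom_lt (q : ℕ) (hq : 2 ≤ q) (h : ℕ) :
    ∑ j ∈ Finset.range h, q ^ j < q ^ h := by
  induction h with
  | zero => simp
  | succ h ih =>
    rw [Finset.sum_range_succ, pow_succ]
    have : q ^ h * 2 ≤ q ^ h * q := Nat.mul_le_mul_left _ hq
    omega

theorem stmt16 (q m h n : ℕ) (hq : 2 ≤ q) (hm : 3 ≤ m) (hmo : Odd m)
    (hh3 : 3 ≤ h) (hh : h ≤ (m - 1) / 2) (hn : n = q ^ m - 1)
    (t : ℕ) (ht : 1 ≤ t) (c : Fin t → ℕ) (hc : StrictMono c)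
    (hc0 : ∀ l, 0 < c l) (hch : ∀ l, c l ≤ h - 1) :
    (∀ u, 1 ≤ u → u ≤ m - 1 →
        ¬ (n ∣ (1 + ∑ l, q ^ c l) * (q ^ u - 1))) ∧
    (Finset.image (fun s => (1 + ∑ l, q ^ c l) * q ^ s % n)
      (Finset.range m)).card = m := by
  set i := 1 + ∑ l, q ^ c l with hi
  have hipos : 0 < i := by omega
  -- i < q ^ h
  have hilt : i < q ^ h := by
    have hsum : ∑ j ∈ Finset.univ.image c, q ^ j = ∑ l, q ^ c l :=
      Finset.sum_image (fun x _ y _ hxy => hc.injective hxy)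
    have hsub : Finset.univ.image c ⊆ Finset.Ico 1 h := by
      intro j hj
      simp only [Finset.mem_image] at hj
      obtain ⟨l, _, rfl⟩ := hj
      have := hc0 l; have := hch l
      simp only [Finset.mem_Ico]; omega
    have h1 : ∑ l, q ^ c l ≤ ∑ j ∈ Finset.Ico 1 h, q ^ j := by
      rw [← hsum]
      exact Finset.sum_le_sum_of_subset hsub
    have h2 : 1 + ∑ j ∈ Finset.Ico 1 h, q ^ j = ∑ j ∈ Finset.range h, q ^ j := by
      have h0 : (0 : ℕ) ∉ Finset.Ico 1 h := by simp
      have hins : insert 0 (Finset.Ico 1 h) = Finset.range h := by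
        rw [Finset.range_eq_Ico]
        exact Finset.insert_Ico_add_one_left_eq_Ico (by omega)
      rw [← hins, Finset.sum_insert h0, pow_zero]
    have := stmt16_geom_lt q hq h
    omega
  have hqm1 : 1 ≤ q ^ m := Nat.one_le_pow _ _ (by omega)
  -- Part 1
  have P1 : ∀ u, 1 ≤ u → u ≤ m - 1 → ¬ (n ∣ i * (q ^ u - 1)) := by
    intro u hu1 hum hdvd
    have hqu1 : 1 ≤ q ^ u := Nat.one_le_pow _ _ (by omega)
    -- cast to ℤ
    have hdvdZ : (n : ℤ) ∣ (i : ℤ) * ((q : ℤ) ^ u - 1) := by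
      have h0 := Int.natCast_dvd_natCast.mpr hdvd
      rwa [Nat.cast_mul, Nat.cast_sub hqu1, Nat.cast_pow, Nat.cast_one] at h0
    have hmZ : (n : ℤ) ∣ (i : ℤ) * ((q : ℤ) ^ m - 1) := by
      have hne : (n : ℤ) = (q : ℤ) ^ m - 1 := by
        rw [hn, Nat.cast_sub hqm1, Nat.cast_pow, Nat.cast_one]
      rw [← hne]
      exact Dvd.dvd.mul_left dvd_rfl _
    set d := Nat.gcd u m with hd
    have hZ : (n : ℤ) ∣ (i : ℤ) * ((q : ℤ) ^ d - 1) := aux_gcd n i q u m hdvdZ hmZ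
    have hd1 : 1 ≤ d := Nat.gcd_pos_of_pos_left m (by omega)
    have hqd1 : 1 ≤ q ^ d := Nat.one_le_pow _ _ (by omega)
    have hN : n ∣ i * (q ^ d - 1) := by
      have hcast : ((i * (q ^ d - 1) : ℕ) : ℤ) = (i : ℤ) * ((q : ℤ) ^ d - 1) := by
        rw [Nat.cast_mul, Nat.cast_sub hqd1, Nat.cast_pow, Nat.cast_one]
      exact_mod_cast hcast ▸ hZ
    -- 3 * d ≤ m
    have hdm : d < m := lt_of_le_of_lt (Nat.gcd_le_left m (by omega)) (by omega)
    have h3d : 3 * d ≤ m := by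
      obtain ⟨k, hk⟩ := Nat.gcd_dvd_right u m
      have hk0 : k ≠ 0 := by rintro rfl; omega
      have hk1 : k ≠ 1 := by rintro rfl; omega
      have hk2 : k ≠ 2 := by
        rintro rfl
        rw [Nat.odd_iff] at hmo
        omega
      have : 3 ≤ k := by omega
      calc 3 * d ≤ k * d := Nat.mul_le_mul_right d this
        _ = d * k := mul_comm _ _
        _ = m := hk.symm
    have hhmd : h ≤ m - d := by omega
    -- size contradiction
    have hqd2 : 2 ≤ q ^ d := by
      calc 2 ≤ q := hq
        _ = q ^ 1 := (pow_one q).symm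
        _ ≤ q ^ d := Nat.pow_le_pow_right (by omega) hd1
    have hle1 : n ≤ i * (q ^ d - 1) :=
      Nat.le_of_dvd (Nat.mul_pos hipos (by omega)) hN
    have hle2 : (q ^ d - 1) * q ^ (m - d) ≤ n := by
      have he : (q ^ d - 1) * q ^ (m - d) = q ^ m - q ^ (m - d) := by
        rw [Nat.sub_mul, one_mul, ← pow_add]
        congr 2
        omega
      have hle : 1 ≤ q ^ (m - d) := Nat.one_le_pow _ _ (by omega)
      rw [hn, he]
      omega
    have hile : q ^ (m - d) ≤ i := by
      have : (q ^ d - 1) * q ^ (m - d) ≤ (q ^ d - 1) * i := by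
        calc (q ^ d - 1) * q ^ (m - d) ≤ n := hle2
          _ ≤ i * (q ^ d - 1) := hle1
          _ = (q ^ d - 1) * i := mul_comm _ _
      exact Nat.le_of_mul_le_mul_left this (by omega)
    have hqh : q ^ h ≤ q ^ (m - d) := Nat.pow_le_pow_right (by omega) hhmd
    omega
  refine ⟨P1, ?_⟩
  -- Part 2
  have hcop : Nat.Coprime q n := by
    have h1 : q ^ m - 1 + 1 = q ^ m := by omega
    have h2 : Nat.Coprime (q ^ m) (q ^ m - 1) := by
      rw [← h1]
      exact Nat.coprime_self_add_left.mpr (Nat.coprime_one_left _)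
    rw [hn]
    exact (Nat.coprime_pow_left_iff (by omega) q (q ^ m - 1)).mp h2
  have aux : ∀ s1 s2, s1 < s2 → s2 < m →
      i * q ^ s1 % n ≠ i * q ^ s2 % n := by
    intro s1 s2 hlt hs2 heq
    have hle : i * q ^ s1 ≤ i * q ^ s2 :=
      Nat.mul_le_mul_left _ (Nat.pow_le_pow_right (by omega) (le_of_lt hlt))
    have hdvd : n ∣ i * q ^ s2 - i * q ^ s1 := (Nat.modEq_iff_dvd' hle).mp heq
    obtain ⟨v, hv⟩ : ∃ v, q ^ (s2 - s1) = v + 1 :=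
      ⟨q ^ (s2 - s1) - 1, by have := Nat.one_le_pow (s2 - s1) q (by omega); omega⟩
    have key : i * q ^ s1 + q ^ s1 * (i * (q ^ (s2 - s1) - 1)) = i * q ^ s2 := by
      have hx : q ^ s2 = q ^ s1 * q ^ (s2 - s1) := by
        rw [← pow_add]; congr 1; omega
      rw [hx, hv]
      simp only [Nat.add_sub_cancel]
      ring
    rw [← key, Nat.add_sub_cancel_left] at hdvd
    have hfin : n ∣ i * (q ^ (s2 - s1) - 1) :=
      ((hcop.symm.pow_right s1).dvd_of_dvd_mul_left hdvd)
    exact P1 (s2 - s1) (by omega) (by omega) hfin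
  rw [Finset.card_image_of_injOn, Finset.card_range]
  intro s1 h1 s2 h2 heq
  simp only [Finset.coe_range, Set.mem_Iio] at h1 h2
  by_contra hne
  rcases Nat.lt_or_ge s1 s2 with hlt | hge
  · exact aux s1 s2 hlt h2 heq
  · exact aux s2 s1 (by omega) h1 heq.symm
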